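/- Let σ_∃ be a subgame winning strategy for L and S a coherent scenario with S ⊆ L. Then EA([S → σ_∃]) is optimal for L and S: it is sufficient for L and compatible with S, and any assumption H sufficient for L and S that contains EA([S → σ_∃]) equals it. -/

import Mathlib

open scoped Classical

universe u v

variable {I : Type u} {O : Type v}

/-- The finite (even) history consisting of the first `n` (input, output) pairs of a word.
A word in `(Σ_I · Σ_O)^ω` is modelled as `w : ℕ → I × O`, where round `n` consists of the
input letter `(w n).1` followed by the output letter `(w n).2`. -/
def wpref (w : ℕ → I × O) (n : ℕ) : List (I × O) := (List.range n).map w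

/-- Outcomes of a controller strategy `σ : (Σ_I·Σ_O)^*·Σ_I → Σ_O`. -/
def OutC (σ : List (I × O) → I → O) : Set (ℕ → I × O) :=
  {w | ∀ n, (w n).2 = σ (wpref w n) (w n).1}

/-- Outcomes of an environment strategy `τ : (Σ_I·Σ_O)^* → Σ_I`. -/
def OutE (τ : List (I × O) → I) : Set (ℕ → I × O) :=
  {w | ∀ n, (w n).1 = τ (wpref w n)}

/-- Input projection `π_I`. -/
def inputProj (w : ℕ → I × O) : ℕ → I := fun n => (w n).1

/-- `A` is an input assumption: closed under changing output letters. -/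
def IsInputAssumption (A : Set (ℕ → I × O)) : Prop :=
  ∀ w w' : ℕ → I × O, inputProj w = inputProj w' → w ∈ A → w' ∈ A

/-- Cylinder `h·(Σ_I·Σ_O)^ω` of an even history `h`. -/
def cylE (h : List (I × O)) : Set (ℕ → I × O) := {w | wpref w h.length = h}

/-- Cylinder of a general history: an even part plus possibly a pending input letter. -/
def cylH (h : List (I × O) × Option I) : Set (ℕ → I × O) :=
  {w | wpref w h.1.length = h.1 ∧ ∀ i, h.2 = some i → (w h.1.length).1 = i}

/-- A scenario is coherent: no history is a prefix of two words of `S`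
that agree on the next input but disagree on the next output. -/
def Coherent (S : Set (ℕ → I × O)) : Prop :=
  ∀ w ∈ S, ∀ w' ∈ S, ∀ n, wpref w n = wpref w' n → (w n).1 = (w' n).1 → (w n).2 = (w' n).2

/-- The strategy `[S → σ]`: follow a word of the scenario `S` extending the current
history if one exists, and otherwise play `σ`. -/
noncomputable def shiftStrat (S : Set (ℕ → I × O))
    (σ : List (I × O) → I → O) : List (I × O) → I → O := fun h i =>
  if hex : ∃ w, w ∈ S ∧ wpref w h.length = h ∧ (w h.length).1 = i
  then (hex.choose h.length).2
  else σ h i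

/-- `EA(σ) = L ∪ ((Σ_I·Σ_O)^ω \ Out(σ))`. -/
def EA (L : Set (ℕ → I × O)) (σ : List (I × O) → I → O) : Set (ℕ → I × O) :=
  L ∪ (OutC σ)ᶜ

/-- The words doomed for `σ`: some even-length prefix extends to an outcome of `σ`,
but no outcome of `σ` extending that prefix is in `L`. -/
def Doomed (L : Set (ℕ → I × O)) (σ : List (I × O) → I → O) : Set (ℕ → I × O) :=
  {w | ∃ k, (OutC σ ∩ cylE (wpref w k)).Nonempty ∧ OutC σ ∩ cylE (wpref w k) ∩ L = ∅}

/-- `EA⁻(σ) = EA(σ) \ Doomed(σ)`. -/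
def EAminus (L : Set (ℕ → I × O)) (σ : List (I × O) → I → O) : Set (ℕ → I × O) :=
  EA L σ \ Doomed L σ

/-- `A` is sufficient for the specification `L` (for some controller strategy). -/
def Sufficient (L A : Set (ℕ → I × O)) : Prop :=
  ∃ σ : List (I × O) → I → O, OutC σ ∩ A ⊆ L

/-- `A` is output-restrictive. -/
def OutputRestrictive (A : Set (ℕ → I × O)) : Prop :=
  ∃ (h : List (I × O)) (σ : List (I × O) → I → O),
    (A ∩ cylE h).Nonempty ∧ (OutC σ ∩ cylE h).Nonempty ∧ A ∩ OutC σ ∩ cylE h = ∅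

/-- The even history of length `n` produced jointly by controller `σ` and environment `τ`. -/
def playH (σ : List (I × O) → I → O) (τ : List (I × O) → I) : ℕ → List (I × O)
  | 0 => []
  | n+1 =>
      let g := playH σ τ n
      g ++ [(τ g, σ g (τ g))]

/-- The unique joint outcome `Out(σ, τ)`. -/
def play (σ : List (I × O) → I → O) (τ : List (I × O) → I) : ℕ → I × O := fun n =>
  let g := playH σ τ n
  (τ g, σ g (τ g))

/-- History construction when the controller follows `σ` against the fixed input word `u`. -/
def playIH (σ : List (I × O) → I → O) (u : ℕ → I) : ℕ → List (I × O)
  | 0 => []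
  | n+1 =>
      let g := playIH σ u n
      g ++ [(u n, σ g (u n))]

/-- The unique outcome `Out(σ, u)` of `σ` against the input word `u`. -/
def playI (σ : List (I × O) → I → O) (u : ℕ → I) : ℕ → I × O := fun n =>
  (u n, σ (playIH σ u n) (u n))

/-- Outcomes extending the history `h` and following `σ` afterwards, `Out_h(σ)`. -/
def OutFrom (σ : List (I × O) → I → O) (h : List (I × O) × Option I) :
    Set (ℕ → I × O) :=
  {w | wpref w h.1.length = h.1 ∧ (∀ i, h.2 = some i → (w h.1.length).1 = i) ∧
       ∀ n, h.1.length ≤ n → (w n).2 = σ (wpref w n) (w n).1}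

/-- Even histories extending the finite history `b`, following `σ` and `τ`. -/
def extH (σ : List (I × O) → I → O) (τ : List (I × O) → I)
    (b : List (I × O)) : ℕ → List (I × O)
  | 0 => b
  | n+1 =>
      let g := extH σ τ b n
      g ++ [(τ g, σ g (τ g))]

/-- The unique word extending `b` and following `σ` and `τ` afterwards. -/
def extPlay (σ : List (I × O) → I → O) (τ : List (I × O) → I)
    (b : List (I × O)) : ℕ → I × O := fun n =>
  if hn : n < b.length then b.get ⟨n, hn⟩
  else
    let g := extH σ τ b (n - b.length)
    (τ g, σ g (τ g))

/-- The even history obtained from the general history `h`, letting `σ` answer a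
pending input letter if there is one. -/
def histBase (σ : List (I × O) → I → O) (h : List (I × O) × Option I) :
    List (I × O) :=
  match h.2 with
  | none => h.1
  | some i => h.1 ++ [(i, σ h.1 i)]

/-- `Out_h(σ, τ)`: the unique word extending `h`, following `σ` and `τ` afterwards. -/
def playFrom (σ : List (I × O) → I → O) (τ : List (I × O) → I)
    (h : List (I × O) × Option I) : ℕ → I × O :=
  extPlay σ τ (histBase σ h)

/-- `σ` is strongly winning for `L`. -/
def StronglyWinning (L : Set (ℕ → I × O)) (σ : List (I × O) → I → O) : Prop :=
  ∀ h : List (I × O) × Option I,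
    (∃ σ' : List (I × O) → I → O, (OutC σ' ∩ cylH h).Nonempty ∧ OutC σ' ∩ cylH h ⊆ L) →
    OutC σ ∩ cylH h ⊆ L

/-- `σ` is subgame winning for `L`. -/
def SubgameWinning (L : Set (ℕ → I × O)) (σ : List (I × O) → I → O) : Prop :=
  ∀ h : List (I × O) × Option I,
    (∃ σ' : List (I × O) → I → O, OutFrom σ' h ⊆ L) → OutFrom σ h ⊆ L

/-- `H` is sufficient for `L` and the scenario `S`. -/
def SufficientLS (L S H : Set (ℕ → I × O)) : Prop :=
  ∃ σ : List (I × O) → I → O, S ⊆ H ∩ OutC σ ∧ H ∩ OutC σ ⊆ L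

/-- if `σ` is subgame winning for `L` and `S` is a coherent scenario
contained in `L`, then `EA([S → σ])` is optimal for `L` and `S`. -/
lemma wpref_length (w : ℕ → I × O) (n : ℕ) : (wpref w n).length = n := by
  simp [wpref]

lemma wpref_apply {w v : ℕ → I × O} {n k : ℕ} (h : wpref w n = wpref v n) (hk : k < n) :
    w k = v k := by
  have h1 : (wpref w n)[k]'(by simp [wpref, hk]) = w k := by simp [wpref]
  have h2 : (wpref v n)[k]'(by simp [wpref, hk]) = v k := by simp [wpref]
  rw [← h1, ← h2]
  congr 1

lemma wpref_congr {w v : ℕ → I × O} {n : ℕ} (h : ∀ k < n, w k = v k) :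
    wpref w n = wpref v n := by
  unfold wpref
  exact List.map_congr_left (fun k hk => h k (List.mem_range.mp hk))

lemma shiftStrat_eq {S : Set (ℕ → I × O)} {σ : List (I × O) → I → O}
    {h : List (I × O)} {i : I}
    (hex : ∃ w, w ∈ S ∧ wpref w h.length = h ∧ (w h.length).1 = i) :
    ∃ v, v ∈ S ∧ wpref v h.length = h ∧ (v h.length).1 = i ∧
      shiftStrat S σ h i = (v h.length).2 := by
  refine ⟨hex.choose, hex.choose_spec.1, hex.choose_spec.2.1, hex.choose_spec.2.2, ?_⟩
  simp only [shiftStrat]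
  rw [dif_pos hex]

theorem EA_shift_optimal_for_scenario
    (L S : Set (ℕ → I × O)) (σ : List (I × O) → I → O)
    (hsg : SubgameWinning L σ) (hcoh : Coherent S) (hSL : S ⊆ L) :
    SufficientLS L S (EA L (shiftStrat S σ)) ∧
    ∀ H : Set (ℕ → I × O), SufficientLS L S H →
      EA L (shiftStrat S σ) ⊆ H → H = EA L (shiftStrat S σ) := by
  have hSout : S ⊆ OutC (shiftStrat S σ) := by
    intro w hw n
    have hex : ∃ v, v ∈ S ∧ wpref v (wpref w n).length = wpref w n ∧
        (v (wpref w n).length).1 = (w n).1 := ⟨w, hw, by rw [wpref_length], by rw [wpref_length]⟩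
    show (w n).2 = shiftStrat S σ (wpref w n) (w n).1
    obtain ⟨v, hv1, hv2, hv3, hv4⟩ := shiftStrat_eq (σ := σ) hex
    rw [wpref_length] at hv2 hv3 hv4
    rw [hv4]
    exact hcoh w hw v hv1 n hv2.symm hv3.symm
  constructor
  · refine ⟨shiftStrat S σ, fun w hw => ⟨Or.inl (hSL hw), hSout hw⟩,
      fun w hw => hw.1.resolve_right (fun h => h hw.2)⟩
  · rintro H ⟨σ₀, hSH, hHL⟩ hEAH
    apply Set.Subset.antisymm _ hEAH
    intro w hwH
    by_cases hw' : w ∈ OutC (shiftStrat S σ)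
    · left
      by_contra hwL
      by_cases hw0 : w ∈ OutC σ₀
      · exact hwL (hHL ⟨hwH, hw0⟩)
      · have hne : ∃ m, ¬ (w m).2 = σ₀ (wpref w m) (w m).1 := not_forall.mp hw0
        set m := Nat.find hne with hmdef
        have hm : ¬ (w m).2 = σ₀ (wpref w m) (w m).1 := Nat.find_spec hne
        have hmin : ∀ k < m, (w k).2 = σ₀ (wpref w k) (w k).1 :=
          fun k hk => not_not.mp (Nat.find_min hne hk)
        -- no word of S matches the history of w at position m
        have hnoS : ¬ ∃ s, s ∈ S ∧ wpref s m = wpref w m ∧ (s m).1 = (w m).1 := by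
          rintro ⟨s, hsS, hs1, hs2⟩
          apply hm
          have hex : ∃ v, v ∈ S ∧ wpref v (wpref w m).length = wpref w m ∧
              (v (wpref w m).length).1 = (w m).1 :=
            ⟨s, hsS, by rw [wpref_length]; exact hs1, by rw [wpref_length]; exact hs2⟩
          have hw'm := hw' m
          change (w m).2 = shiftStrat S σ (wpref w m) (w m).1 at hw'm
          obtain ⟨c, hc1, hc2, hc3, hc4⟩ := shiftStrat_eq (σ := σ) hex
          rw [wpref_length] at hc2 hc3 hc4
          rw [hc4] at hw'm
          have hcs : (c m).2 = (s m).2 :=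
            hcoh c hc1 s hsS m (hc2.trans hs1.symm) (hc3.trans hs2.symm)
          have hs0 : (s m).2 = σ₀ (wpref s m) (s m).1 := (hSH hsS).2 m
          rw [hw'm, hcs, hs0, hs1, hs2]
        -- the scenario never matches w from m on
        have hnoHex : ∀ n, m ≤ n → ¬ ∃ v, v ∈ S ∧ wpref v (wpref w n).length = wpref w n ∧
            (v (wpref w n).length).1 = (w n).1 := by
          rintro n hn ⟨v, hv, h1, h2⟩
          rw [wpref_length] at h1 h2
          apply hnoS
          rcases eq_or_lt_of_le hn with rfl | hlt
          · exact ⟨v, hv, h1, h2⟩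
          · have hvm : v m = w m := wpref_apply h1 hlt
            exact ⟨v, hv, wpref_congr (fun k hk => wpref_apply h1 (hk.trans hlt)),
              by rw [hvm]⟩
        -- w follows σ from m on
        have hwfollow : ∀ n, m ≤ n → (w n).2 = σ (wpref w n) (w n).1 := by
          intro n hn
          have h1 := hw' n
          change (w n).2 = shiftStrat S σ (wpref w n) (w n).1 at h1
          rw [h1]
          simp only [shiftStrat]
          rw [dif_neg (hnoHex n hn)]
        -- σ₀ is winning from the history (wpref w m, some (w m).1)
        have hwin : OutFrom σ₀ (wpref w m, some (w m).1) ⊆ L := by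
          rintro x ⟨hx1, hx2, hx3⟩
          simp only [wpref_length] at hx1 hx2 hx3
          have hx2' : (x m).1 = (w m).1 := hx2 (w m).1 rfl
          have hxk : ∀ k < m, x k = w k := fun k hk => wpref_apply hx1 hk
          have hx0 : x ∈ OutC σ₀ := by
            intro n
            rcases lt_or_ge n m with hn | hn
            · have hp : wpref x n = wpref w n := wpref_congr (fun k hk => hxk k (hk.trans hn))
              rw [hxk n hn, hp]
              exact hmin n hn
            · exact hx3 n hn
          have hxH : x ∈ H := by
            apply hEAH
            right
            intro hxout
            apply hm
            have h1 := hxout m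
            have h2 := hx3 m le_rfl
            have h3 := hw' m
            change (x m).2 = shiftStrat S σ (wpref x m) (x m).1 at h1
            change (w m).2 = shiftStrat S σ (wpref w m) (w m).1 at h3
            rw [hx1, hx2'] at h1 h2
            rw [← h3] at h1
            rw [← h1, h2]
          exact hHL ⟨hxH, hx0⟩
        refine hwL (hsg (wpref w m, some (w m).1) ⟨σ₀, hwin⟩ ?_)
        refine ⟨by rw [wpref_length], ?_, ?_⟩
        · intro i hi
          rw [wpref_length]
          exact (Option.some_inj.mp hi).symm ▸ rfl
        · intro n hn
          rw [wpref_length] at hn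
          exact hwfollow n hn
    · exact Or.inr hw'
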